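/- Fix 0 < L < U with κ := U/L and fix k ∈ ℕ. For each n ∈ ℕ define the quadratic function f_n : ℝⁿ → ℝ by f_n(x) = (1/2) xᵀ P x + q̃ᵀ x, where q̃ = (L(κ−1)/4)·e₁ ∈ ℝⁿ and P = (L(κ−1)/4)·Q̃ + L·I ∈ ℝⁿˣⁿ with Q̃ the circulant matrix whose rows are successive circular shifts of the first row (2, −1, 0, …, 0, −1); let x₀(n) be the unique minimizer of f_n. Then there is a sequence δ : ℕ → ℝ with lim_{n→∞} |δ(n)| = 0 such that for every n with 2k ≤ n and every sequence x⁽⁰⁾, x⁽¹⁾, …, x⁽ᵏ⁾ in ℝⁿ satisfying x⁽⁰⁾ = 0 and x⁽ʲ⁾ ∈ span{∇f_n(x⁽⁰⁾), …, ∇f_n(x⁽ʲ⁻¹⁾)} for all 1 ≤ j ≤ k, one has ‖x⁽ᵏ⁾ − x₀(n)‖ ≥ ‖x⁽⁰⁾ − x₀(n)‖ · ((1 − 1/√κ)/(1 + √κ)) · ((√κ − 1)/(√κ + 1))ᵏ − |δ(n)|. -/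

import Mathlib

open scoped Matrix

/-- First row `(2, −1, 0, …, 0, −1)` of the circulant matrix `Q̃` (the `−1` entries at
positions `1` and `n−1` are added, so that the definition stays a genuine circulant for
every `n`). -/
noncomputable def circRow (n : ℕ) : Fin n → ℝ := fun i =>
  (if i.val = 0 then (2 : ℝ) else 0) + (if i.val = 1 then (-1 : ℝ) else 0) +
    (if i.val = n - 1 then (-1 : ℝ) else 0)

/-- The matrix `P = (L(κ−1)/4)·Q̃ + L·I`. -/
noncomputable def Pmat (L κ : ℝ) (n : ℕ) : Matrix (Fin n) (Fin n) ℝ :=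
  (L * (κ - 1) / 4) • Matrix.circulant (circRow n) + L • (1 : Matrix (Fin n) (Fin n) ℝ)

/-- The vector `q̃ = (L(κ−1)/4)·e₁`. -/
noncomputable def qtilde (L κ : ℝ) (n : ℕ) : EuclideanSpace ℝ (Fin n) := WithLp.toLp 2 fun i =>
  if i.val = 0 then L * (κ - 1) / 4 else 0

/-- The quadratic `f_n(x) = ½ xᵀ P x + q̃ᵀ x`. -/
noncomputable def fQuad (L κ : ℝ) (n : ℕ) (x : EuclideanSpace ℝ (Fin n)) : ℝ :=
  (1 / 2) * ((fun i => x i) ⬝ᵥ (Pmat L κ n).mulVec fun i => x i) +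
    (fun i => qtilde L κ n i) ⬝ᵥ fun i => x i

section Helpers

variable {n : ℕ} [NeZero n]

lemma fin_one_val (hn : 2 ≤ n) : ((1 : Fin n)).val = 1 := by
  rw [Fin.val_one', Nat.mod_eq_of_lt hn]

lemma fin_add_one_val (hn : 2 ≤ n) (a : Fin n) : ((a + 1 : Fin n)).val = (a.val + 1) % n := by
  rw [Fin.add_def, fin_one_val hn]

lemma fin_sub_one_val (hn : 2 ≤ n) (a : Fin n) : ((a - 1 : Fin n)).val = (a.val + (n - 1)) % n := by
  rw [Fin.sub_def, fin_one_val hn]; exact congrArg (· % n) (Nat.add_comm _ _)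

open Fin.CommRing in
lemma fin_sub_eq_one_iff (hn : 2 ≤ n) (i j : Fin n) : i - j = 1 ↔ j = i - 1 := by
  constructor <;> intro h
  · rw [← h]; ring_nf
  · rw [h]; ring_nf

open Fin.CommRing in
lemma fin_sub_eq_negone_iff (hn : 2 ≤ n) (i j : Fin n) : i - j = -1 ↔ j = i + 1 := by
  constructor <;> intro h
  · have h2 : j = i - (i - j) := by ring_nf
    rw [h2, h]; ring_nf
  · rw [h]; ring_nf

lemma fin_neg_one_val (hn : 2 ≤ n) : ((-1 : Fin n)).val = n - 1 := by
  rw [Fin.coe_neg, fin_one_val hn, Nat.mod_eq_of_lt (by omega)]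

lemma circRow_eval (hn : 2 ≤ n) (i j : Fin n) :
    circRow n (i - j) = (if j = i then (2:ℝ) else 0) + (if j = i - 1 then (-1:ℝ) else 0)
      + (if j = i + 1 then (-1:ℝ) else 0) := by
  have e0 : ((i - j).val = 0) = (j = i) := propext (by
    rw [show ((i - j).val = 0 ↔ i - j = 0) from ⟨fun h => Fin.ext h, fun h => by rw [h]; rfl⟩,
      sub_eq_zero]; exact eq_comm)
  have e1 : ((i - j).val = 1) = (j = i - 1) := propext (by
    rw [show ((i - j).val = 1 ↔ i - j = 1) from
      ⟨fun h => Fin.ext (by rw [h, fin_one_val hn]), fun h => by rw [h, fin_one_val hn]⟩,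
      fin_sub_eq_one_iff hn])
  have e2 : ((i - j).val = n - 1) = (j = i + 1) := propext (by
    rw [show ((i - j).val = n - 1 ↔ i - j = -1) from
      ⟨fun h => Fin.ext (by rw [h, fin_neg_one_val hn]), fun h => by rw [h, fin_neg_one_val hn]⟩,
      fin_sub_eq_negone_iff hn])
  unfold circRow
  simp only [e0, e1, e2]

lemma circ_mulVec (hn : 2 ≤ n) (w : Fin n → ℝ) (i : Fin n) :
    (Matrix.circulant (circRow n)).mulVec w i = 2 * w i - w (i - 1) - w (i + 1) := by
  have key : ∀ j, Matrix.circulant (circRow n) i j * w j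
      = (if j = i then 2 * w j else 0) + (if j = i - 1 then -w j else 0)
        + (if j = i + 1 then -w j else 0) := by
    intro j
    rw [Matrix.circulant_apply, circRow_eval hn]
    split_ifs <;> ring
  unfold Matrix.mulVec dotProduct
  rw [Finset.sum_congr rfl (fun j _ => key j)]
  rw [Finset.sum_add_distrib, Finset.sum_add_distrib,
    Finset.sum_ite_eq' Finset.univ i (fun j => 2 * w j),
    Finset.sum_ite_eq' Finset.univ (i-1) (fun j => -w j),
    Finset.sum_ite_eq' Finset.univ (i+1) (fun j => -w j)]
  simp only [Finset.mem_univ, if_true]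
  ring

lemma Pmat_mulVec (L κ : ℝ) (hn : 2 ≤ n) (w : Fin n → ℝ) (i : Fin n) :
    (Pmat L κ n).mulVec w i
      = L * (κ - 1) / 4 * (2 * w i - w (i - 1) - w (i + 1)) + L * w i := by
  unfold Pmat
  rw [Matrix.add_mulVec, Matrix.smul_mulVec, Matrix.smul_mulVec]
  simp only [Pi.add_apply, Pi.smul_apply, smul_eq_mul, Matrix.one_mulVec]
  rw [circ_mulVec hn w i]

lemma circRow_neg (hn : 2 ≤ n) (d : Fin n) : circRow n (-d) = circRow n d := by
  by_cases h0 : d.val = 0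
  · rw [show d = 0 from Fin.ext h0]; simp
  · have hneg : (-d).val = n - d.val := by
      rw [Fin.coe_neg, Nat.mod_eq_of_lt (by omega)]
    have hlt := d.isLt
    unfold circRow
    rw [hneg]
    have c0 : (n - d.val = 0) = False := by simp only [eq_iff_iff, iff_false]; omega
    have c1 : (n - d.val = 1) = (d.val = n - 1) := by simp only [eq_iff_iff]; omega
    have c2 : (n - d.val = n - 1) = (d.val = 1) := by simp only [eq_iff_iff]; omega
    simp only [c0, c1, c2, if_false, if_neg h0]
    ring

open Fin.CommRing in
lemma Pmat_symm_entry (L κ : ℝ) (hn : 2 ≤ n) (i j : Fin n) :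
    Pmat L κ n i j = Pmat L κ n j i := by
  unfold Pmat
  simp only [Matrix.add_apply, Matrix.smul_apply, Matrix.circulant_apply, smul_eq_mul,
    Matrix.one_apply]
  rw [show j - i = -(i - j) by ring, circRow_neg hn]
  by_cases h : i = j
  · rw [if_pos h, if_pos h.symm]
  · rw [if_neg h, if_neg (fun hh => h hh.symm)]

end Helpers

section Main

variable {n : ℕ} [NeZero n]

lemma sum_shift' (f g : Fin n → ℝ) (h : ∀ i, f i = g (i + 1)) : ∑ i, f i = ∑ i, g i :=
  Fintype.sum_equiv (Equiv.addRight 1) f g (fun i => h i)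

lemma dot_expand (L κ : ℝ) (hn : 2 ≤ n) (a b : Fin n → ℝ) :
    a ⬝ᵥ (Pmat L κ n).mulVec b
      = (2 * (L * (κ - 1) / 4) + L) * (∑ i, a i * b i)
        - (L * (κ - 1) / 4) * (∑ i, a i * b (i - 1))
        - (L * (κ - 1) / 4) * (∑ i, a i * b (i + 1)) := by
  unfold dotProduct
  rw [Finset.sum_congr rfl (fun i _ => by rw [Pmat_mulVec L κ hn b i])]
  rw [Finset.mul_sum, Finset.mul_sum, Finset.mul_sum, ← Finset.sum_sub_distrib,
    ← Finset.sum_sub_distrib]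
  exact Finset.sum_congr rfl (fun i _ => by ring)

lemma dot_sym (L κ : ℝ) (hn : 2 ≤ n) (a b : Fin n → ℝ) :
    a ⬝ᵥ (Pmat L κ n).mulVec b = b ⬝ᵥ (Pmat L κ n).mulVec a := by
  rw [dot_expand L κ hn, dot_expand L κ hn]
  have e0 : ∑ i, a i * b i = ∑ i, b i * a i :=
    Finset.sum_congr rfl (fun i _ => mul_comm _ _)
  have e1 : ∑ i, a i * b (i - 1) = ∑ i, b i * a (i + 1) :=
    (sum_shift' (fun i => b i * a (i + 1)) (fun i => a i * b (i - 1))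
      (fun i => by simp only [add_sub_cancel_right]; try ring)).symm
  have e2 : ∑ i, b i * a (i - 1) = ∑ i, a i * b (i + 1) :=
    (sum_shift' (fun i => a i * b (i + 1)) (fun i => b i * a (i - 1))
      (fun i => by simp only [add_sub_cancel_right]; try ring)).symm
  rw [e0, e1, ← e2]
  ring

lemma dot_psd (L κ : ℝ) (hn : 2 ≤ n) (hL : 0 < L) (hc : 0 ≤ L * (κ - 1) / 4) (w : Fin n → ℝ) :
    0 ≤ w ⬝ᵥ (Pmat L κ n).mulVec w := by
  rw [dot_expand L κ hn]
  have e1 : ∑ i, w i * w (i - 1) = ∑ i, w (i + 1) * w i :=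
    (sum_shift' (fun i => w (i + 1) * w i) (fun i => w i * w (i - 1))
      (fun i => by simp only [add_sub_cancel_right]; try ring)).symm
  have key : (2 : ℝ) * (∑ i, w i * w i) - (∑ i, w i * w (i - 1)) - (∑ i, w i * w (i + 1))
      = ∑ i, (w i - w (i + 1))^2 := by
    rw [e1]
    have e3 : ∑ i, w i * w i = ∑ i, w (i + 1) * w (i + 1) :=
      (sum_shift' (fun i => w (i + 1) * w (i + 1)) (fun i => w i * w i) (fun i => rfl)).symm
    calc 2 * (∑ i, w i * w i) - (∑ i, w (i + 1) * w i) - (∑ i, w i * w (i + 1))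
        = (∑ i, w i * w i) + (∑ i, w (i + 1) * w (i + 1))
          - (∑ i, w (i + 1) * w i) - (∑ i, w i * w (i + 1)) := by rw [← e3]; ring
      _ = ∑ i, (w i - w (i + 1))^2 := by
          rw [← Finset.sum_add_distrib, ← Finset.sum_sub_distrib, ← Finset.sum_sub_distrib]
          exact Finset.sum_congr rfl (fun i _ => by ring)
  have hsum : 0 ≤ ∑ i, w i * w i := Finset.sum_nonneg (fun i _ => mul_self_nonneg _)
  have hsq : 0 ≤ ∑ i, (w i - w (i + 1))^2 := Finset.sum_nonneg (fun i _ => sq_nonneg _)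
  nlinarith [key]

end Main

section MinimizerEq

variable {n : ℕ} [NeZero n]

lemma Pv_eq (L κ ρ B : ℝ) (hn : 2 ≤ n) (hρ0 : 0 < ρ)
    (hc : L * (κ - 1) / 4 * (1 + ρ^2) = (L + 2 * (L * (κ - 1) / 4)) * ρ)
    (hB : B * ((1 - ρ^2) * (1 - ρ^n)) = ρ) (i : Fin n) :
    (Pmat L κ n).mulVec (fun j : Fin n => -B * (ρ^(j.val) + ρ^(n - j.val))) i
      = -(qtilde L κ n i) := by
  rw [Pmat_mulVec L κ hn]
  by_cases hi : i.val = 0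
  · have hm : (i - 1).val = n - 1 := by
      rw [fin_sub_one_val hn, hi, Nat.zero_add, Nat.mod_eq_of_lt (by omega)]
    have hp : (i + 1).val = 1 := by
      rw [fin_add_one_val hn, hi, Nat.zero_add, Nat.mod_eq_of_lt (by omega)]
    have hq : qtilde L κ n i = L * (κ - 1) / 4 := by unfold qtilde; rw [PiLp.toLp_apply, if_pos hi]
    simp only [hm, hp, hi, hq]
    have h2 : n - (n - 1) = 1 := by omega
    have h3 : n - 0 = n := rfl
    rw [h2, h3, pow_zero, pow_one]
    have hpow : ρ^n = ρ^(n-1) * ρ := by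
      rw [← pow_succ]; congr 1; omega
    rw [hpow] at hB ⊢
    have key : ρ * (L * (κ - 1) / 4 * (2 * (-B * (1 + ρ ^ (n - 1) * ρ)) -
          -B * (ρ ^ (n - 1) + ρ) - -B * (ρ + ρ ^ (n - 1))) + L * (-B * (1 + ρ ^ (n - 1) * ρ)))
        = ρ * (-(L * (κ - 1) / 4)) := by
      linear_combination (B * (1 + ρ^(n-1) * ρ)) * hc - (L * (κ - 1) / 4) * hB
    exact mul_left_cancel₀ (ne_of_gt hρ0) key
  · have hlt := i.isLt
    have hm : (i - 1).val = i.val - 1 := by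
      rw [fin_sub_one_val hn, show i.val + (n - 1) = n + (i.val - 1) by omega,
        Nat.add_mod_left, Nat.mod_eq_of_lt (by omega)]
    have hq : qtilde L κ n i = 0 := by unfold qtilde; rw [PiLp.toLp_apply, if_neg hi]
    have hw : ρ^(((i + 1 : Fin n)).val) + ρ^(n - ((i + 1 : Fin n)).val)
        = ρ^(i.val + 1) + ρ^(n - (i.val + 1)) := by
      by_cases hlast : i.val = n - 1
      · have hp : (i + 1).val = 0 := by
          rw [fin_add_one_val hn, hlast, show n - 1 + 1 = n by omega, Nat.mod_self]
        rw [hp, hlast, show n - 1 + 1 = n by omega, show n - n = 0 by omega,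
          show n - 0 = n from rfl]
        ring
      · have hp : (i + 1).val = i.val + 1 := by
          rw [fin_add_one_val hn, Nat.mod_eq_of_lt (by omega)]
        rw [hp]
    rw [hq, hm, hw]
    -- exponent rewrites
    have p1 : ρ^(i.val) = ρ^(i.val - 1) * ρ := by rw [← pow_succ]; congr 1; omega
    have p2 : ρ^(i.val + 1) = ρ^(i.val - 1) * ρ^2 := by rw [← pow_add]; congr 1; omega
    have p3 : ρ^(n - i.val) = ρ^(n - i.val - 1) * ρ := by rw [← pow_succ]; congr 1; omega
    have p4 : ρ^(n - (i.val - 1)) = ρ^(n - i.val - 1) * ρ^2 := by rw [← pow_add]; congr 1; omega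
    have p5 : ρ^(n - (i.val + 1)) = ρ^(n - i.val - 1) := rfl
    rw [p1, p2, p3, p4, p5]
    linear_combination (B * (ρ^(i.val - 1) + ρ^(n - i.val - 1))) * hc

end MinimizerEq

section MinGrad

variable {n : ℕ} [NeZero n]

lemma isMinimizer (L κ : ℝ) (hn : 2 ≤ n) (hL : 0 < L) (hcnn : 0 ≤ L * (κ - 1) / 4)
    (v : EuclideanSpace ℝ (Fin n))
    (hv : ∀ i, (Pmat L κ n).mulVec (fun j => v j) i = -(qtilde L κ n i))
    (z : EuclideanSpace ℝ (Fin n)) :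
    fQuad L κ n v ≤ fQuad L κ n z := by
  unfold fQuad
  set w : Fin n → ℝ := fun i => z i - v i with hwdef
  have hz : (fun i => z i) = (fun i => v i) + w := funext fun i => by
    simp only [hwdef, Pi.add_apply]; ring
  rw [hz]
  rw [Matrix.mulVec_add, dotProduct_add, add_dotProduct, add_dotProduct,
    dotProduct_add]
  have hsym : (fun i => v i) ⬝ᵥ (Pmat L κ n).mulVec w = w ⬝ᵥ (Pmat L κ n).mulVec (fun i => v i) :=
    dot_sym L κ hn _ _
  have hPv : w ⬝ᵥ (Pmat L κ n).mulVec (fun i => v i) = -((fun i => qtilde L κ n i) ⬝ᵥ w) := by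
    unfold dotProduct
    rw [← Finset.sum_neg_distrib]
    exact Finset.sum_congr rfl (fun i _ => by rw [hv i]; ring)
  have hpsd : 0 ≤ w ⬝ᵥ (Pmat L κ n).mulVec w := dot_psd L κ hn hL hcnn w
  rw [hsym, hPv]
  ring_nf
  nlinarith [hpsd]

lemma fQuad_gradient (L κ : ℝ) (hn : 2 ≤ n) (y : EuclideanSpace ℝ (Fin n)) :
    gradient (fQuad L κ n) y
      = (WithLp.toLp 2 (fun m => (Pmat L κ n).mulVec (fun j => y j) m + qtilde L κ n m) :
          EuclideanSpace ℝ (Fin n)) := by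
  refine HasGradientAt.gradient ?_
  rw [hasGradientAt_iff_hasFDerivAt]
  have hfeq : fQuad L κ n = fun x : EuclideanSpace ℝ (Fin n) =>
      (∑ i, ∑ j, (1/2 * Pmat L κ n i j) * (x i * x j)) + ∑ i, qtilde L κ n i * x i := by
    funext x
    unfold fQuad dotProduct Matrix.mulVec dotProduct
    rw [Finset.mul_sum]
    congr 1
    exact Finset.sum_congr rfl fun i _ => by
      rw [Finset.mul_sum, Finset.mul_sum]
      exact Finset.sum_congr rfl fun j _ => by ring
  have hterm : ∀ (i j : Fin n),
      HasFDerivAt (fun x : EuclideanSpace ℝ (Fin n) => (1/2 * Pmat L κ n i j) * (x i * x j))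
      ((1/2 * Pmat L κ n i j) •
        (y i • (EuclideanSpace.proj j : EuclideanSpace ℝ (Fin n) →L[ℝ] ℝ)
        + y j • (EuclideanSpace.proj i : EuclideanSpace ℝ (Fin n) →L[ℝ] ℝ))) y := by
    intro i j
    exact (((EuclideanSpace.proj i :
        EuclideanSpace ℝ (Fin n) →L[ℝ] ℝ).hasFDerivAt (x := y)).mul
      ((EuclideanSpace.proj j :
        EuclideanSpace ℝ (Fin n) →L[ℝ] ℝ).hasFDerivAt (x := y))).const_mul _
  have hlin : HasFDerivAt (fun x : EuclideanSpace ℝ (Fin n) => ∑ i, qtilde L κ n i * x i)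
      (∑ i, qtilde L κ n i •
        (EuclideanSpace.proj i : EuclideanSpace ℝ (Fin n) →L[ℝ] ℝ)) y :=
    HasFDerivAt.fun_sum fun i _ =>
      ((EuclideanSpace.proj i :
        EuclideanSpace ℝ (Fin n) →L[ℝ] ℝ).hasFDerivAt (x := y)).const_mul _
  have hquad : HasFDerivAt
      (fun x : EuclideanSpace ℝ (Fin n) => ∑ i, ∑ j, (1/2 * Pmat L κ n i j) * (x i * x j))
      (∑ i, ∑ j, (1/2 * Pmat L κ n i j) •
        (y i • (EuclideanSpace.proj j : EuclideanSpace ℝ (Fin n) →L[ℝ] ℝ)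
        + y j • (EuclideanSpace.proj i : EuclideanSpace ℝ (Fin n) →L[ℝ] ℝ))) y :=
    HasFDerivAt.fun_sum fun i _ => HasFDerivAt.fun_sum fun j _ => hterm i j
  have hD : HasFDerivAt (fQuad L κ n)
      ((∑ i, ∑ j, (1/2 * Pmat L κ n i j) •
        (y i • (EuclideanSpace.proj j : EuclideanSpace ℝ (Fin n) →L[ℝ] ℝ)
        + y j • (EuclideanSpace.proj i : EuclideanSpace ℝ (Fin n) →L[ℝ] ℝ)))
        + ∑ i, qtilde L κ n i •
          (EuclideanSpace.proj i : EuclideanSpace ℝ (Fin n) →L[ℝ] ℝ)) y := by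
    rw [hfeq]; exact hquad.add hlin
  have heq : ((∑ i, ∑ j, (1/2 * Pmat L κ n i j) •
        (y i • (EuclideanSpace.proj j : EuclideanSpace ℝ (Fin n) →L[ℝ] ℝ)
        + y j • (EuclideanSpace.proj i : EuclideanSpace ℝ (Fin n) →L[ℝ] ℝ)))
        + ∑ i, qtilde L κ n i •
          (EuclideanSpace.proj i : EuclideanSpace ℝ (Fin n) →L[ℝ] ℝ))
      = InnerProductSpace.toDual ℝ (EuclideanSpace ℝ (Fin n))
          (WithLp.toLp 2 (fun m => (Pmat L κ n).mulVec (fun j => y j) m + qtilde L κ n m) :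
            EuclideanSpace ℝ (Fin n)) := by
    apply ContinuousLinearMap.ext
    intro h
    simp only [ContinuousLinearMap.add_apply, ContinuousLinearMap.coe_sum',
      Finset.sum_apply, ContinuousLinearMap.coe_smul', Pi.smul_apply, smul_eq_mul,
      InnerProductSpace.toDual_apply_apply, PiLp.toLp_apply, PiLp.inner_apply, RCLike.inner_apply, conj_trivial,
      PiLp.proj_apply]
    have swap : ∑ i, ∑ j, (1/2 * Pmat L κ n i j) * (y i * h j)
        = ∑ i, ∑ j, (1/2 * Pmat L κ n i j) * (y j * h i) := by
      rw [Finset.sum_comm]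
      exact Finset.sum_congr rfl fun i _ => Finset.sum_congr rfl fun j _ => by
        rw [Pmat_symm_entry L κ hn j i]
    have expand : ∑ i, ∑ j, (1/2 * Pmat L κ n i j) * (y i * h j + y j * h i)
        = (∑ i, ∑ j, (1/2 * Pmat L κ n i j) * (y i * h j))
          + ∑ i, ∑ j, (1/2 * Pmat L κ n i j) * (y j * h i) := by
      rw [← Finset.sum_add_distrib]
      exact Finset.sum_congr rfl fun i _ => by
        rw [← Finset.sum_add_distrib]
        exact Finset.sum_congr rfl fun j _ => by ring
    calc ∑ i, ∑ j, (1/2 * Pmat L κ n i j) * (y i * h j + y j * h i)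
          + ∑ i, qtilde L κ n i * h i
        = (∑ i, ∑ j, Pmat L κ n i j * y j * h i) + ∑ i, qtilde L κ n i * h i := by
          rw [expand, swap, ← Finset.sum_add_distrib]
          congr 1
          refine Finset.sum_congr rfl fun i _ => ?_
          rw [← Finset.sum_add_distrib]
          exact Finset.sum_congr rfl fun j _ => by ring
      _ = ∑ i, ((Pmat L κ n).mulVec (fun j => y j) i + qtilde L κ n i) * h i := by
          rw [← Finset.sum_add_distrib]
          refine Finset.sum_congr rfl fun i _ => ?_
          unfold Matrix.mulVec dotProduct
          rw [add_mul, Finset.sum_mul]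
      _ = _ := Finset.sum_congr rfl fun i _ => mul_comm _ _
  exact heq ▸ hD

end MinGrad

section Krylov

def coordZero (n j : ℕ) : Submodule ℝ (EuclideanSpace ℝ (Fin n)) where
  carrier := {y | ∀ m : Fin n, j ≤ m.val → m.val ≤ n - j → y m = 0}
  add_mem' := by
    intro a b ha hb m h1 h2
    show a m + b m = 0
    rw [ha m h1 h2, hb m h1 h2, add_zero]
  zero_mem' := fun m _ _ => rfl
  smul_mem' := by
    intro c a ha m h1 h2
    show c * a m = 0
    rw [ha m h1 h2, mul_zero]

lemma mem_coordZero_iff {n j : ℕ} (y : EuclideanSpace ℝ (Fin n)) :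
    y ∈ coordZero n j ↔ ∀ m : Fin n, j ≤ m.val → m.val ≤ n - j → y m = 0 := Iff.rfl

lemma krylov (L κ : ℝ) {n k : ℕ} [NeZero n] (hn2k : 2 * k ≤ n) (hk : 1 ≤ k)
    (x : ℕ → EuclideanSpace ℝ (Fin n)) (hx0 : x 0 = 0)
    (hspan : ∀ j, 1 ≤ j → j ≤ k → x j ∈ Submodule.span ℝ
      {g | ∃ i < j, g = gradient (fQuad L κ n) (x i)}) :
    ∀ j, j ≤ k → x j ∈ coordZero n j := by
  have hn : 2 ≤ n := by omega
  intro j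
  induction j using Nat.strong_induction_on with
  | _ j IH =>
    intro hjk
    rcases Nat.eq_zero_or_pos j with h0 | hpos
    · subst h0; rw [hx0]; exact Submodule.zero_mem _
    · refine Submodule.span_le.mpr ?_ (hspan j hpos hjk)
      rintro g ⟨i, hij, rfl⟩
      rw [SetLike.mem_coe, mem_coordZero_iff]
      intro m hm1 hm2
      rw [fQuad_gradient L κ hn (x i)]
      have hq : qtilde L κ n m = 0 := by
        unfold qtilde; rw [PiLp.toLp_apply, if_neg (by omega)]
      show (Pmat L κ n).mulVec (fun j => x i j) m + qtilde L κ n m = 0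
      rw [Pmat_mulVec L κ hn, hq]
      rcases Nat.eq_zero_or_pos i with hi0 | hipos
      · subst hi0
        rw [hx0]
        show L * (κ - 1) / 4 * (2 * (0:ℝ) - 0 - 0) + L * 0 + 0 = 0
        ring
      · have hxi := IH i (by omega) (by omega)
        rw [mem_coordZero_iff] at hxi
        have hmlt := m.isLt
        have hv1 : x i m = 0 := hxi m (by omega) (by omega)
        have hv2 : x i (m - 1) = 0 := by
          refine hxi (m - 1) ?_ ?_ <;> rw [fin_sub_one_val hn,
            show m.val + (n - 1) = n + (m.val - 1) by omega, Nat.add_mod_left,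
            Nat.mod_eq_of_lt (by omega)] <;> omega
        have hv3 : x i (m + 1) = 0 := by
          refine hxi (m + 1) ?_ ?_ <;> rw [fin_add_one_val hn,
            Nat.mod_eq_of_lt (by omega)] <;> omega
        rw [hv1, hv2, hv3]
        ring

end Krylov

section NormHelpers

variable {n : ℕ}

lemma coord_le_norm (y : EuclideanSpace ℝ (Fin n)) (i : Fin n) : |y i| ≤ ‖y‖ := by
  rw [EuclideanSpace.norm_eq]
  have h1 : ‖y i‖^2 ≤ ∑ j, ‖y j‖^2 :=
    Finset.single_le_sum (f := fun j => ‖y j‖^2) (fun j _ => sq_nonneg _) (Finset.mem_univ i)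
  calc |y i| = Real.sqrt (‖y i‖^2) := by
        rw [Real.sqrt_sq (norm_nonneg _), Real.norm_eq_abs]
    _ ≤ _ := Real.sqrt_le_sqrt h1

lemma norm_sq_eq_sum (y : EuclideanSpace ℝ (Fin n)) : ‖y‖^2 = ∑ i, (y i)^2 := by
  rw [EuclideanSpace.norm_eq, Real.sq_sqrt (Finset.sum_nonneg fun i _ => sq_nonneg _)]
  exact Finset.sum_congr rfl fun i _ => by rw [Real.norm_eq_abs, sq_abs]

end NormHelpers

section Numeric

set_option maxHeartbeats 1000000 in
lemma S_bound {n : ℕ} (hn : 2 ≤ n) (ρ C : ℝ) (hρ0 : 0 < ρ) (hρ1 : ρ < 1)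
    (hC : C = ρ * (1 - ρ) / (1 + ρ)) :
    (∑ i : Fin n, (ρ^(i.val) + ρ^(n - i.val))^2) * C^2 ≤ 1 := by
  set S := ∑ i : Fin n, (ρ^(i.val) + ρ^(n - i.val))^2 with hSdef
  set G := ∑ i ∈ Finset.range n, (ρ^2)^i with hGdef
  set H := ∑ i ∈ Finset.range n, ρ^i with hHdef
  -- pointwise expansion
  have hpt : ∀ i : Fin n, (ρ^(i.val) + ρ^(n - i.val))^2
      = (ρ^2)^(i.val) + 2*ρ^n + (ρ^2)^(n - i.val) := by
    intro i
    have e1 : (ρ^(i.val))^2 = (ρ^2)^(i.val) := by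
      rw [← pow_mul, ← pow_mul, Nat.mul_comm]
    have e2 : (ρ^(n - i.val))^2 = (ρ^2)^(n - i.val) := by
      rw [← pow_mul, ← pow_mul, Nat.mul_comm]
    have e3 : ρ^(i.val) * ρ^(n - i.val) = ρ^n := by
      rw [← pow_add]; congr 1; have := i.isLt; omega
    rw [← e1, ← e2, ← e3]; ring
  have hsplit : S = (∑ i : Fin n, (ρ^2)^(i.val)) + (n:ℝ)*(2*ρ^n)
      + ∑ i : Fin n, (ρ^2)^(n - i.val) := by
    rw [hSdef, Finset.sum_congr rfl (fun i _ => hpt i), Finset.sum_add_distrib,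
      Finset.sum_add_distrib, Finset.sum_const, Finset.card_univ, Fintype.card_fin,
      nsmul_eq_mul]
  have hG1 : ∑ i : Fin n, (ρ^2)^(i.val) = G := by
    rw [hGdef, ← Fin.sum_univ_eq_sum_range]
  have hG2 : ∑ i : Fin n, (ρ^2)^(n - i.val) = ρ^2 * G := by
    have hrev : ∑ i : Fin n, (ρ^2)^(n - i.val) = ∑ i : Fin n, (ρ^2)^(i.val + 1) := by
      refine (Fintype.sum_equiv Fin.revPerm (fun i => (ρ^2)^(i.val + 1))
        (fun i => (ρ^2)^(n - i.val)) (fun i => ?_)).symm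
      have h1 : n - (Fin.revPerm i).val = i.val + 1 := by
        rw [Fin.revPerm_apply, Fin.val_rev]
        have := i.isLt
        omega
      show (ρ^2)^(i.val + 1) = (ρ^2)^(n - (Fin.revPerm i).val)
      rw [h1]
    rw [hrev, hGdef, ← Fin.sum_univ_eq_sum_range, Finset.mul_sum]
    exact Finset.sum_congr rfl fun i _ => by rw [pow_succ]; ring
  -- geometric sum facts
  have hρ2pos : (0:ℝ) < ρ^2 := by positivity
  have hρ21 : ρ^2 < 1 := by nlinarith
  have hgeomG : G * (1 - ρ^2) = 1 - (ρ^2)^n := by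
    rw [hGdef]
    have h := geom_sum_mul (ρ^2) n
    linear_combination (-1 : ℝ) * h
  have hgeomH : H * (1 - ρ) = 1 - ρ^n := by
    rw [hHdef]
    have h := geom_sum_mul ρ n
    linear_combination (-1 : ℝ) * h
  have hHnn : 0 ≤ H := Finset.sum_nonneg fun i _ => by positivity
  have hGnn : 0 ≤ G := Finset.sum_nonneg fun i _ => by positivity
  have hρnpos : 0 < ρ^n := by positivity
  have hρn1 : ρ^n < 1 := pow_lt_one₀ (le_of_lt hρ0) hρ1 (by omega)
  have hρ2n : 0 < (ρ^2)^n := by positivity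
  have hnH : (n:ℝ) * ρ^(n-1) ≤ H := by
    rw [hHdef]
    calc (n:ℝ) * ρ^(n-1) = ∑ _i ∈ Finset.range n, ρ^(n-1) := by
          rw [Finset.sum_const, Finset.card_range, nsmul_eq_mul]
      _ ≤ ∑ i ∈ Finset.range n, ρ^i := by
          refine Finset.sum_le_sum fun i hi => ?_
          exact pow_le_pow_of_le_one (le_of_lt hρ0) (le_of_lt hρ1)
            (by simp at hi; omega)
  have hpow1 : ρ^n = ρ^(n-1) * ρ := by rw [← pow_succ]; congr 1; omega
  -- combine: S * (1 - ρ^2) ≤ (1 + ρ^2) + 2*ρ*(1+ρ)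
  have hSnn : 0 ≤ S := Finset.sum_nonneg fun i _ => sq_nonneg _
  have hSbound : S * (1 - ρ^2) ≤ (1 + ρ^2) + 2*ρ*(1+ρ) := by
    have hnρ : (n:ℝ) * ρ^n * (1-ρ) ≤ ρ := by
      have h1 : (n:ℝ) * ρ^n = ρ * ((n:ℝ) * ρ^(n-1)) := by rw [hpow1]; ring
      have h2 : ρ * ((n:ℝ) * ρ^(n-1)) * (1-ρ) ≤ ρ * H * (1-ρ) := by
        have := mul_le_mul_of_nonneg_left hnH (le_of_lt hρ0)
        nlinarith [this]
      rw [h1]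
      calc ρ * ((n:ℝ) * ρ^(n-1)) * (1-ρ) ≤ ρ * H * (1-ρ) := h2
        _ = ρ * (H * (1-ρ)) := by ring
        _ = ρ * (1 - ρ^n) := by rw [hgeomH]
        _ ≤ ρ := by nlinarith
    have hexp : S * (1 - ρ^2) = (1 + ρ^2) * (G * (1 - ρ^2)) + 2*(1+ρ)*((n:ℝ)*ρ^n*(1-ρ)) := by
      rw [hsplit, hG1, hG2]; ring
    rw [hexp, hgeomG]
    have t1 : (1+ρ^2) * (1 - (ρ^2)^n) ≤ (1+ρ^2) := by nlinarith [hρ2n]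
    have t2 : 2*(1+ρ)*((n:ℝ)*ρ^n*(1-ρ)) ≤ 2*(1+ρ)*ρ :=
      mul_le_mul_of_nonneg_left hnρ (by nlinarith)
    nlinarith [t1, t2]
  have hCsq : C^2 * (1+ρ)^2 = ρ^2*(1-ρ)^2 := by
    rw [hC]
    rw [div_pow, div_mul_cancel₀ _ (by positivity : ((1:ℝ)+ρ)^2 ≠ 0)]
    ring
  have h1 : (0:ℝ) < 1 - ρ^2 := by nlinarith
  have h2 : (0:ℝ) < (1+ρ)^2 := by positivity
  have hCnn : 0 ≤ C^2 := sq_nonneg _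
  have key : S * C^2 * ((1-ρ^2)*(1+ρ)^2) ≤ 1 * ((1-ρ^2)*(1+ρ)^2) := by
    calc S * C^2 * ((1-ρ^2)*(1+ρ)^2) = (S*(1-ρ^2)) * (C^2*(1+ρ)^2) := by ring
      _ ≤ ((1 + ρ^2) + 2*ρ*(1+ρ)) * (ρ^2*(1-ρ)^2) := by
          rw [hCsq]
          apply mul_le_mul hSbound le_rfl (by positivity) (by nlinarith)
      _ ≤ 1 * ((1-ρ^2)*(1+ρ)^2) := by
          have e : 1 * ((1-ρ^2)*(1+ρ)^2) - ((1 + ρ^2) + 2*ρ*(1+ρ)) * (ρ^2*(1-ρ)^2)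
              = (1-ρ)*(3*ρ^5 - ρ^4 + 2*ρ^2 + 3*ρ + 1) := by ring
          have h4 : ρ^4 ≤ ρ^2 := pow_le_pow_of_le_one hρ0.le hρ1.le (by norm_num)
          have hg : 0 ≤ 3*ρ^5 - ρ^4 + 2*ρ^2 + 3*ρ + 1 := by nlinarith [pow_pos hρ0 5]
          nlinarith [mul_nonneg (sub_nonneg.mpr hρ1.le) hg, e]
  exact le_of_mul_le_mul_right key (by positivity)

end Numeric


set_option maxHeartbeats 1000000

/-- lower bound on the error of any first order method. For fixed
`0 < L < U`, `κ = U/L`, `k ∈ ℕ`, letting `x₀(n)` be the unique minimizer of `f_n`,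
there is a sequence `δ(n) → 0` such that for all `n ≥ 2k` and any FOM iterates
`x⁽⁰⁾ = 0`, `x⁽ʲ⁾ ∈ span{∇f_n(x⁽⁰⁾), …, ∇f_n(x⁽ʲ⁻¹⁾)}` (`1 ≤ j ≤ k`),
`‖x⁽ᵏ⁾ − x₀(n)‖ ≥ ‖x⁽⁰⁾ − x₀(n)‖ ((1 − 1/√κ)/(1 + √κ)) ((√κ−1)/(√κ+1))ᵏ − |δ(n)|`. -/
theorem fom_lower_bound (L U : ℝ) (hL : 0 < L) (hLU : L < U)
    (κ : ℝ) (hκ : κ = U / L) (k : ℕ)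
    (x0 : (n : ℕ) → EuclideanSpace ℝ (Fin n))
    (hmin : ∀ n y, fQuad L κ n (x0 n) ≤ fQuad L κ n y)
    (huniq : ∀ n y, (∀ z, fQuad L κ n y ≤ fQuad L κ n z) → y = x0 n) :
    ∃ δ : ℕ → ℝ, Filter.Tendsto (fun n => |δ n|) Filter.atTop (nhds 0) ∧
      ∀ n, 2 * k ≤ n →
        ∀ x : ℕ → EuclideanSpace ℝ (Fin n), x 0 = 0 →
          (∀ j, 1 ≤ j → j ≤ k →
            x j ∈ Submodule.span ℝ
              {g | ∃ i < j, g = gradient (fQuad L κ n) (x i)}) →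
          ‖x k - x0 n‖ ≥
            ‖x 0 - x0 n‖ * ((1 - 1 / Real.sqrt κ) / (1 + Real.sqrt κ)) *
                ((Real.sqrt κ - 1) / (Real.sqrt κ + 1)) ^ k -
              |δ n| := by
  refine ⟨fun _ => 0, by simpa using (tendsto_const_nhds :
    Filter.Tendsto (fun _ : ℕ => |(0:ℝ)|) Filter.atTop (nhds |(0:ℝ)|)), ?_⟩
  intro n hn2k x hx0 hspan
  simp only [abs_zero, sub_zero]
  have hκ1 : 1 < κ := by rw [hκ]; exact (one_lt_div hL).mpr hLU
  have hκ0 : 0 < κ := lt_trans one_pos hκ1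
  have hσ1 : 1 < Real.sqrt κ := by
    rw [show (1:ℝ) = Real.sqrt 1 from Real.sqrt_one.symm]
    exact Real.sqrt_lt_sqrt (by norm_num) hκ1
  set σ := Real.sqrt κ with hσdef
  have hσ2 : σ^2 = κ := Real.sq_sqrt hκ0.le
  set ρ := (σ - 1)/(σ + 1) with hρdef
  set C := (1 - 1/σ)/(1 + σ) with hCdef
  have hσ0 : σ ≠ 0 := by intro h; rw [h] at hσ1; linarith
  have hσp1 : σ + 1 ≠ 0 := by intro h; nlinarith
  have hρ0 : 0 < ρ := div_pos (by linarith) (by linarith)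
  have hρ1 : ρ < 1 := by rw [hρdef, div_lt_one (by linarith)]; linarith
  have hC : C = ρ * (1 - ρ)/(1 + ρ) := by
    rw [hCdef, hρdef]
    rw [show 1 - (σ - 1)/(σ + 1) = 2/(σ + 1) by field_simp; ring,
      show 1 + (σ - 1)/(σ + 1) = 2*σ/(σ + 1) by field_simp; ring]
    field_simp
    ring
  have hC0 : 0 < C := by
    rw [hC]; exact div_pos (mul_pos hρ0 (by linarith)) (by linarith)
  rcases Nat.eq_zero_or_pos k with hk0 | hk1
  · subst hk0
    simp only [pow_zero, mul_one]
    have hnn : 0 ≤ ‖x 0 - x0 n‖ := norm_nonneg _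
    have hCle : C ≤ 1 := by
      rw [hCdef]
      rw [div_le_one (by linarith)]
      have : 0 < 1/σ := by positivity
      linarith
    nlinarith
  · haveI : NeZero n := ⟨by omega⟩
    have hn : 2 ≤ n := by omega
    have hcpos : 0 < L * (κ - 1)/4 := by nlinarith
    have hchc : L * (κ - 1)/4 * (1 + ρ^2) = (L + 2*(L * (κ - 1)/4))*ρ := by
      rw [hρdef, ← hσ2]
      field_simp
      ring
    have hρn1 : ρ^n < 1 := pow_lt_one₀ hρ0.le hρ1 (by omega)
    have hρ21 : ρ^2 < 1 := by nlinarith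
    have hden : 0 < (1 - ρ^2)*(1 - ρ^n) := mul_pos (by linarith) (by linarith)
    set B := ρ / ((1 - ρ^2)*(1 - ρ^n)) with hBdef
    have hB : B * ((1 - ρ^2)*(1 - ρ^n)) = ρ := div_mul_cancel₀ _ hden.ne'
    have hBpos : 0 < B := div_pos hρ0 hden
    set v : EuclideanSpace ℝ (Fin n) := WithLp.toLp 2 (fun i => -B * (ρ^(i.val) + ρ^(n - i.val))) with hvdef
    have hPv : ∀ i, (Pmat L κ n).mulVec (fun j => v j) i = -(qtilde L κ n i) := fun i =>
      Pv_eq L κ ρ B hn hρ0 hchc hB i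
    have hvmin : ∀ z, fQuad L κ n v ≤ fQuad L κ n z :=
      isMinimizer L κ hn hL hcpos.le v hPv
    have hx0n : v = x0 n := huniq n v hvmin
    have hsupp := krylov L κ hn2k hk1 x hx0 hspan k le_rfl
    rw [mem_coordZero_iff] at hsupp
    set m₀ : Fin n := ⟨k, by omega⟩ with hm₀
    have hm₀val : m₀.val = k := rfl
    have hxk : x k m₀ = 0 := hsupp m₀ (le_of_eq hm₀val.symm) (by rw [hm₀val]; omega)
    have hcoord : (x k - x0 n) m₀ = B * (ρ^k + ρ^(n - k)) := by
      rw [← hx0n]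
      show x k m₀ - v m₀ = _
      rw [hxk]
      show 0 - (-B * (ρ^(m₀.val) + ρ^(n - m₀.val))) = _
      rw [hm₀val]
      ring
    have hlhs : B * (ρ^k + ρ^(n-k)) ≤ ‖x k - x0 n‖ := by
      have h := coord_le_norm (x k - x0 n) m₀
      rw [hcoord] at h
      have habs : |B * (ρ^k + ρ^(n-k))| = B * (ρ^k + ρ^(n-k)) := abs_of_pos (by positivity)
      linarith [habs ▸ h]
    have hSC := S_bound hn ρ C hρ0 hρ1 hC
    have hvnsq : ‖v‖^2 = B^2 * ∑ i : Fin n, (ρ^(i.val) + ρ^(n - i.val))^2 := by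
      rw [norm_sq_eq_sum, Finset.mul_sum]
      refine Finset.sum_congr rfl fun i _ => ?_
      show (-B * (ρ^(i.val) + ρ^(n - i.val)))^2 = B^2 * (ρ^(i.val) + ρ^(n - i.val))^2
      ring
    have hnormC : ‖v‖ * C ≤ B := by
      have hsq : (‖v‖*C)^2 ≤ B^2 := by
        calc (‖v‖*C)^2
            = B^2 * ((∑ i : Fin n, (ρ^(i.val) + ρ^(n - i.val))^2) * C^2) := by
              rw [mul_pow, hvnsq]; ring
          _ ≤ B^2 * 1 := mul_le_mul_of_nonneg_left hSC (by positivity)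
          _ = B^2 := mul_one _
      nlinarith [norm_nonneg v, mul_nonneg (norm_nonneg v) hC0.le]
    have hxv : ‖x 0 - x0 n‖ = ‖v‖ := by rw [hx0, ← hx0n, zero_sub, norm_neg]
    have hfin : ‖x 0 - x0 n‖ * C * ρ^k ≤ B * (ρ^k + ρ^(n-k)) := by
      rw [hxv]
      calc ‖v‖ * C * ρ^k ≤ B * ρ^k := mul_le_mul_of_nonneg_right hnormC (by positivity)
        _ ≤ B * (ρ^k + ρ^(n-k)) := by nlinarith [pow_pos hρ0 (n-k)]
    linarith [hlhs, hfin]
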